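/- Let G be a directed graph and u a vertex. Let S be a 1-edge-out component of u with unique outgoing edge (x,y). Then there exist two edge-disjoint paths from u to x within S. -/

import Mathlib

/-- The set of edges of `E` going from inside `S` to outside `S`. -/
def OutEdges {V : Type*} (E : Set (V × V)) (S : Set V) : Set (V × V) :=
  {e ∈ E | e.1 ∈ S ∧ e.2 ∉ S}

/-- `S` is a 1-edge-out component of `u`: a minimal set of vertices containing `u`
whose induced subgraph has at most one outgoing edge. -/
def IsOneEdgeOut {V : Type*} (E : Set (V × V)) (u : V) (S : Set V) : Prop :=
  u ∈ S ∧ (OutEdges E S).Subsingleton ∧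
    ∀ S' : Set V, S' ⊂ S → u ∈ S' → ¬ (OutEdges E S').Subsingleton

/-- `l` is a path from `a` to `b` in the digraph `E`, all of whose vertices lie in `S`. -/
def IsPathIn {V : Type*} (E : Set (V × V)) (S : Set V) (a b : V) (l : List V) : Prop :=
  l.head? = some a ∧ l.getLast? = some b ∧ (∀ w ∈ l, w ∈ S) ∧
    List.Chain' (fun p q => (p, q) ∈ E) l

/-- The (directed) edges used by a path given as a list of vertices. -/
def pathEdges {V : Type*} (l : List V) : List (V × V) := l.zip l.tail

namespace StmtAux
open scoped Classical
variable {V : Type*}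

/-- out-degree minus in-degree of `v` in the edge finset `F`, as an integer. -/
noncomputable def dz (F : Finset (V × V)) (v : V) : ℤ :=
  ((F.filter (fun e => e.1 = v)).card : ℤ) - ((F.filter (fun e => e.2 = v)).card : ℤ)

lemma dz_empty (v : V) : dz (∅ : Finset (V × V)) v = 0 := by simp [dz]

lemma dz_insert {F : Finset (V × V)} {e : V × V} (he : e ∉ F) (v : V) :
    dz (insert e F) v = dz F v + (if e.1 = v then 1 else 0) - (if e.2 = v then 1 else 0) := by
  classical
  simp only [dz, Finset.filter_insert]
  split_ifs with h1 h2 h2 <;>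
    [skip; skip; skip; (push_cast; ring)] <;>
    (repeat rw [Finset.card_insert_of_notMem (fun hc => he (Finset.mem_filter.mp hc).1)]) <;>
    (push_cast; ring)

lemma dz_erase {F : Finset (V × V)} {e : V × V} (he : e ∈ F) (v : V) :
    dz (F.erase e) v = dz F v - (if e.1 = v then 1 else 0) + (if e.2 = v then 1 else 0) := by
  classical
  have h := dz_insert (F := F.erase e) (e := e) (Finset.notMem_erase e F) v
  rw [Finset.insert_erase he] at h
  omega

lemma dz_sdiff {F G : Finset (V × V)} (h : G ⊆ F) (v : V) :
    dz (F \ G) v = dz F v - dz G v := by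
  classical
  have key : ∀ p : V × V → Prop,
      (((F \ G).filter p).card : ℤ) = ((F.filter p).card : ℤ) - ((G.filter p).card : ℤ) := by
    intro p
    have h1 : (F \ G).filter p = F.filter p \ G.filter p := by
      ext e; simp only [Finset.mem_sdiff, Finset.mem_filter]; tauto
    rw [h1, Finset.card_sdiff_of_subset (Finset.filter_subset_filter _ h)]
    have := Finset.card_le_card (Finset.filter_subset_filter p h)
    push_cast [Nat.cast_sub this]
    ring
  simp only [dz, key]
  ring

lemma pathEdges_cons_cons (a b : V) (l : List V) :
    pathEdges (a :: b :: l) = (a, b) :: pathEdges (b :: l) := rfl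

lemma pathEdges_singleton (a : V) : pathEdges [a] = [] := rfl

/-- divergence of the edge set of a duplicate-free-edge walk. -/
lemma dz_pathEdges : ∀ (l : List V) (a b : V), l.head? = some a → l.getLast? = some b →
    (pathEdges l).Nodup →
    ∀ v, dz (pathEdges l).toFinset v = (if a = v then 1 else 0) - (if b = v then 1 else 0)
  | [], a, b, h, _, _, _ => by simp at h
  | [c], a, b, h, h2, _, v => by
      simp only [List.head?_cons, Option.some_inj] at h
      simp only [List.getLast?_singleton, Option.some_inj] at h2
      subst h; subst h2
      simp [pathEdges_singleton, dz_empty]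
  | c :: d :: t, a, b, h, h2, hnd, v => by
      simp only [List.head?_cons, Option.some_inj] at h
      subst h
      rw [List.getLast?_cons_cons] at h2
      rw [pathEdges_cons_cons] at hnd
      rw [List.nodup_cons] at hnd
      have ih := dz_pathEdges (d :: t) d b rfl h2 hnd.2 v
      rw [pathEdges_cons_cons, List.toFinset_cons,
        dz_insert (by simpa using hnd.1), ih]
      split_ifs <;> omega

/-- From reflexive-transitive reachability, get a duplicate-free path. -/
lemma exists_nodup_path {r : V → V → Prop} {a b : V} (h : Relation.ReflTransGen r a b) :
    ∃ l : List V, l.head? = some a ∧ l.getLast? = some b ∧ l.Chain' r ∧ l.Nodup := by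
  induction h using Relation.ReflTransGen.head_induction_on with
  | refl => exact ⟨[b], rfl, by simp, List.isChain_singleton _, by simp⟩
  | head h' _ ih =>
    rename_i a c hcb
    obtain ⟨l, hh, hl, hc, hnd⟩ := ih
    by_cases ha : a ∈ l
    · obtain ⟨s, t, rfl⟩ := List.append_of_mem ha
      refine ⟨a :: t, rfl, ?_, hc.suffix ⟨s, rfl⟩, hnd.sublist (List.sublist_append_right s _)⟩
      rw [List.getLast?_append] at hl
      obtain ⟨z, hz⟩ : ∃ z, (a :: t).getLast? = some z := by
        cases e : (a :: t).getLast? with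
        | none => simp at e
        | some z => exact ⟨z, rfl⟩
      rw [hz] at hl
      change some z = some b at hl
      rw [hz, hl]
    · refine ⟨a :: l, rfl, ?_, ?_, List.nodup_cons.mpr ⟨ha, hnd⟩⟩
      · cases l with
        | nil => simp at hh
        | cons c' t => rw [List.getLast?_cons_cons]; exact hl
      · change List.IsChain _ _; rw [List.isChain_cons]
        exact ⟨fun y hy => by rw [hh] at hy; cases hy; exact h', hc⟩

/-- Extract a trail (edge-duplicate-free path) from a nonneg-divergence edge set. -/
lemma extract_trail (E : Set (V × V)) (S : Set V) (x : V) :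
    ∀ (n : ℕ) (F : Finset (V × V)) (a : V), F.card = n →
    (↑F ⊆ {e : V × V | e ∈ E ∧ e.1 ∈ S ∧ e.2 ∈ S}) → a ∈ S → a ≠ x →
    0 < dz F a → (∀ v, v ≠ x → 0 ≤ dz F v) →
    ∃ l : List V, IsPathIn E S a x l ∧ (pathEdges l).Nodup ∧ ∀ e ∈ pathEdges l, e ∈ F := by
  intro n
  induction n using Nat.strong_induction_on with
  | _ n IH =>
    intro F a hcard hE haS hax hda hnn
    have hout : (F.filter (fun e => e.1 = a)).Nonempty := by
      rw [← Finset.card_pos]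
      by_contra hc
      push_neg at hc
      interval_cases h : (F.filter (fun e => e.1 = a)).card
      · unfold dz at hda; rw [h] at hda; push_cast at hda; omega
    obtain ⟨e, he⟩ := hout
    rw [Finset.mem_filter] at he
    obtain ⟨heF, he1⟩ := he
    have heE : e ∈ E := (hE heF).1
    have he2S : e.2 ∈ S := (hE heF).2.2
    have hee : e = (a, e.2) := by rw [← he1]
    by_cases hb : e.2 = x
    · refine ⟨[a, x], ⟨rfl, rfl, ?_, ?_⟩, by simp [pathEdges], ?_⟩
      · intro w hw
        simp only [List.mem_cons, List.not_mem_nil, or_false] at hw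
        rcases hw with rfl | rfl
        · exact haS
        · exact hb ▸ he2S
      · change List.IsChain _ _; rw [List.isChain_cons_cons]
        exact ⟨by rw [← hb, ← hee]; exact heE, List.isChain_singleton _⟩
      · intro f hf
        have : f = (a, x) := by simpa [pathEdges] using hf
        rw [this, ← hb, ← hee]; exact heF
    · set b := e.2 with hbdef
      set F' := F.erase e with hF'
      have hcard' : F'.card < n := by
        rw [← hcard, hF']
        exact Finset.card_erase_lt_of_mem heF
      have hdz' : ∀ v, dz F' v = dz F v - (if a = v then 1 else 0) + (if b = v then 1 else 0) := by
        intro v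
        rw [hF', dz_erase heF v, he1, hbdef]
      have hbS : b ∈ S := he2S
      have hdb : 0 < dz F' b := by
        have h1 := hdz' b
        by_cases hab : a = b
        · rw [if_pos hab, if_pos rfl] at h1; rw [h1, ← hab]; omega
        · rw [if_neg hab, if_pos rfl] at h1
          have := hnn b hb
          omega
      have hnn' : ∀ v, v ≠ x → 0 ≤ dz F' v := by
        intro v hv
        have h1 := hdz' v
        have h2 := hnn v hv
        by_cases hav : a = v
        · subst hav; split_ifs at h1 <;> omega
        · rw [if_neg hav] at h1; split_ifs at h1 <;> omega
      obtain ⟨l', hP', hnd', hsub'⟩ := IH F'.card hcard' F' b rfl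
        (fun f hf => hE (Finset.erase_subset e F hf)) hbS hb hdb hnn'
      obtain ⟨hh', hl', hm', hc'⟩ := hP'
      cases l' with
      | nil => simp at hh'
      | cons b' t =>
        have hb' : b' = b := by simpa using hh'
        subst hb'
        refine ⟨a :: b :: t, ⟨rfl, by rw [List.getLast?_cons_cons]; exact hl', ?_, ?_⟩, ?_, ?_⟩
        · intro w hw
          rcases List.mem_cons.mp hw with h | h
          · exact h ▸ haS
          · exact hm' w h
        · change List.IsChain _ _; rw [List.isChain_cons_cons]
          exact ⟨by rw [← hee]; exact heE, hc'⟩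
        · have : pathEdges (a :: b :: t) = (a, b) :: pathEdges (b :: t) := rfl
          rw [this, List.nodup_cons]
          refine ⟨fun hmem => ?_, hnd'⟩
          have := hsub' _ hmem
          rw [hF', ← hee] at this
          exact (Finset.notMem_erase e F) this
        · intro f hf
          have : pathEdges (a :: b :: t) = (a, b) :: pathEdges (b :: t) := rfl
          rw [this, List.mem_cons] at hf
          rcases hf with h | h
          · rw [h, ← hee]; exact heF
          · exact Finset.erase_subset e F (hsub' _ h)

/-- A residual step with respect to flow `F`. -/
def ResStep (E : Set (V × V)) (S : Set V) (F : Finset (V × V)) (p q : V) : Prop :=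
  p ∈ S ∧ q ∈ S ∧ (((p, q) ∈ E ∧ (p, q) ∉ F) ∨ (q, p) ∈ F)

/-- Augmenting along a vertex-disjoint residual path increases the divergence. -/
lemma augment (E : Set (V × V)) (S : Set V) (x : V) (F : Finset (V × V)) :
    ∀ (l : List V) (G : Finset (V × V)) (a : V), l.head? = some a → l.getLast? = some x →
    l.Nodup → l.Chain' (ResStep E S F) →
    (↑G ⊆ {e : V × V | e ∈ E ∧ e.1 ∈ S ∧ e.2 ∈ S}) →
    (∀ p q : V, (p ∈ l.tail ∨ q ∈ l.tail) → ((p, q) ∈ G ↔ (p, q) ∈ F)) →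
    ∃ G' : Finset (V × V), (↑G' ⊆ {e : V × V | e ∈ E ∧ e.1 ∈ S ∧ e.2 ∈ S}) ∧
      ∀ v, dz G' v = dz G v + (if a = v then 1 else 0) - (if x = v then 1 else 0)
  | [], G, a, hh, _, _, _, _, _ => by simp at hh
  | [c], G, a, hh, hl, _, _, hG, _ => by
      simp only [List.head?_cons, Option.some_inj] at hh
      simp only [List.getLast?_singleton, Option.some_inj] at hl
      subst hh; subst hl
      exact ⟨G, hG, fun v => by ring⟩
  | c :: d :: t, G, a, hh, hl, hnd, hch, hG, hagree => by
      simp only [List.head?_cons, Option.some_inj] at hh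
      subst hh
      rw [List.getLast?_cons_cons] at hl
      change List.IsChain _ _ at hch; rw [List.isChain_cons_cons] at hch
      obtain ⟨hstep, hch'⟩ := hch
      rw [List.nodup_cons] at hnd
      obtain ⟨hant, hnd'⟩ := hnd
      have hadt : c ∉ t := fun h => hant (List.mem_cons_of_mem d h)
      have hdt : d ∉ t := (List.nodup_cons.mp hnd').1
      obtain ⟨haS, hdS, hres⟩ := hstep
      have key : ∃ G1 : Finset (V × V),
          (↑G1 ⊆ {e : V × V | e ∈ E ∧ e.1 ∈ S ∧ e.2 ∈ S}) ∧
          (∀ v, dz G1 v = dz G v + (if c = v then 1 else 0) - (if d = v then 1 else 0)) ∧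
          (∀ p q : V, (p, q) ≠ (c, d) → (p, q) ≠ (d, c) → ((p, q) ∈ G1 ↔ (p, q) ∈ G)) := by
        rcases hres with ⟨hE1, hF1⟩ | hF2
        · have hGad : (c, d) ∉ G := fun h =>
            hF1 ((hagree c d (Or.inr (List.mem_cons_self (a := d) (l := t)))).mp h)
          refine ⟨insert (c, d) G, ?_, fun v => dz_insert hGad v, ?_⟩
          · intro e he
            rcases Finset.mem_coe.mp he |> Finset.mem_insert.mp with rfl | h
            · exact ⟨hE1, haS, hdS⟩
            · exact hG h
          · intro p q h1 h2
            rw [Finset.mem_insert]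
            simp [h1]
        · have hGda : (d, c) ∈ G :=
            (hagree d c (Or.inl (List.mem_cons_self (a := d) (l := t)))).mpr hF2
          refine ⟨G.erase (d, c), ?_, fun v =>
            calc dz (G.erase (d, c)) v
                = dz G v - (if d = v then 1 else 0) + (if c = v then 1 else 0) :=
                  dz_erase hGda v
              _ = dz G v + (if c = v then 1 else 0) - (if d = v then 1 else 0) := by ring, ?_⟩
          · exact fun e he => hG (Finset.erase_subset _ _ he)
          · intro p q h1 h2
            rw [Finset.mem_erase]
            simp [h2]
      obtain ⟨G1, hG1sub, hG1dz, hG1mem⟩ := key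
      have hagree' : ∀ p q : V, (p ∈ (d :: t).tail ∨ q ∈ (d :: t).tail) →
          ((p, q) ∈ G1 ↔ (p, q) ∈ F) := by
        intro p q hpq
        have h1 : (p, q) ≠ (c, d) := by
          intro hpe
          rw [Prod.mk.injEq] at hpe
          obtain ⟨rfl, rfl⟩ := hpe
          simp only [List.tail_cons] at hpq
          rcases hpq with h | h
          · exact hadt h
          · exact hdt h
        have h2 : (p, q) ≠ (d, c) := by
          intro hpe
          rw [Prod.mk.injEq] at hpe
          obtain ⟨rfl, rfl⟩ := hpe
          simp only [List.tail_cons] at hpq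
          rcases hpq with h | h
          · exact hdt h
          · exact hadt h
        rw [hG1mem p q h1 h2]
        exact hagree p q (by
          simp only [List.tail_cons] at hpq ⊢
          exact hpq.imp (List.mem_cons_of_mem d) (List.mem_cons_of_mem d))
      obtain ⟨G', hG'sub, hG'dz⟩ :=
        augment E S x F (d :: t) G1 d rfl hl hnd' hch' hG1sub hagree'
      refine ⟨G', hG'sub, fun v => ?_⟩
      rw [hG'dz v, hG1dz v]
      ring

lemma residual_reach (E : Set (V × V)) (S : Set V) (u x y : V)
    (hu : u ∈ S) (hx : x ∈ S)
    (hmin : ∀ S' : Set V, S' ⊂ S → u ∈ S' → ¬ (OutEdges E S').Subsingleton)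
    (hout : OutEdges E S = {(x, y)})
    (F : Finset (V × V)) (hF : ↑F ⊆ {e : V × V | e ∈ E ∧ e.1 ∈ S ∧ e.2 ∈ S})
    (hdu : dz F u ≤ 1) (hdv : ∀ v, v ≠ u → v ≠ x → dz F v = 0) :
    Relation.ReflTransGen (ResStep E S F) u x := by
  classical
  by_contra hnr
  set T : Set V := {v | v ∈ S ∧ Relation.ReflTransGen (ResStep E S F) u v} with hT
  have huT : u ∈ T := ⟨hu, Relation.ReflTransGen.refl⟩
  have hxT : x ∉ T := fun h => hnr h.2
  have hTS : T ⊂ S := by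
    refine Set.ssubset_iff_subset_ne.mpr ⟨fun v hv => hv.1, fun he => hxT (he ▸ hx)⟩
  have hstep : ∀ p q, p ∈ T → ResStep E S F p q → q ∈ T :=
    fun p q hp h => ⟨h.2.1, hp.2.tail h⟩
  apply hmin T hTS huT
  set cross := F.filter (fun e => e.1 ∈ T ∧ e.2 ∉ T) with hcrossdef
  have hsub : OutEdges E T ⊆ ↑cross := by
    rintro ⟨p, q⟩ ⟨hEe, hpT, hqT⟩
    by_cases hqS : q ∈ S
    · by_cases hFe : (p, q) ∈ F
      · exact Finset.mem_coe.mpr (Finset.mem_filter.mpr ⟨hFe, hpT, hqT⟩)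
      · exact absurd (hstep p q hpT ⟨hpT.1, hqS, Or.inl ⟨hEe, hFe⟩⟩) hqT
    · have hmem : (p, q) ∈ OutEdges E S := ⟨hEe, hpT.1, hqS⟩
      rw [hout, Set.mem_singleton_iff, Prod.mk.injEq] at hmem
      exact absurd (hmem.1 ▸ hpT) hxT
  have hnoin : F.filter (fun e => e.2 ∈ T ∧ e.1 ∉ T) = ∅ := by
    rw [Finset.filter_eq_empty_iff]
    rintro e heF ⟨h2, h1⟩
    refine h1 (hstep e.2 e.1 h2 ⟨(hF heF).2.2, (hF heF).2.1, Or.inr ?_⟩)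
    simpa using heF
  set W : Finset V := F.image Prod.fst ∪ F.image Prod.snd with hW
  set Wf : Finset V := W.filter (fun v => v ∈ T) with hWf
  have hfib1 : (F.filter (fun e => e.1 ∈ T)).card
      = ∑ v ∈ Wf, (F.filter (fun e => e.1 = v)).card := by
    rw [Finset.card_eq_sum_card_fiberwise (f := Prod.fst) (t := Wf)
      (fun e he => by
        rw [Finset.mem_coe, Finset.mem_filter] at he
        exact Finset.mem_filter.mpr ⟨Finset.mem_union_left _
          (Finset.mem_image_of_mem _ he.1), he.2⟩)]
    refine Finset.sum_congr rfl fun v hv => ?_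
    congr 1
    ext e
    simp only [Finset.mem_filter]
    constructor
    · rintro ⟨⟨h1, _⟩, h3⟩; exact ⟨h1, h3⟩
    · rintro ⟨h1, h3⟩
      exact ⟨⟨h1, h3 ▸ (Finset.mem_filter.mp hv).2⟩, h3⟩
  have hfib2 : (F.filter (fun e => e.2 ∈ T)).card
      = ∑ v ∈ Wf, (F.filter (fun e => e.2 = v)).card := by
    rw [Finset.card_eq_sum_card_fiberwise (f := Prod.snd) (t := Wf)
      (fun e he => by
        rw [Finset.mem_coe, Finset.mem_filter] at he
        exact Finset.mem_filter.mpr ⟨Finset.mem_union_right _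
          (Finset.mem_image_of_mem _ he.1), he.2⟩)]
    refine Finset.sum_congr rfl fun v hv => ?_
    congr 1
    ext e
    simp only [Finset.mem_filter]
    constructor
    · rintro ⟨⟨h1, _⟩, h3⟩; exact ⟨h1, h3⟩
    · rintro ⟨h1, h3⟩
      exact ⟨⟨h1, h3 ▸ (Finset.mem_filter.mp hv).2⟩, h3⟩
  have hsum : ((F.filter (fun e => e.1 ∈ T)).card : ℤ)
      - ((F.filter (fun e => e.2 ∈ T)).card : ℤ) = ∑ v ∈ Wf, dz F v := by
    rw [hfib1, hfib2]
    push_cast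
    rw [← Finset.sum_sub_distrib]
    rfl
  have hsum_u : ∑ v ∈ Wf, dz F v = dz F u := by
    refine Finset.sum_eq_single u (fun v hv hvu => ?_) (fun hu' => ?_)
    · have hvT : v ∈ T := (Finset.mem_filter.mp hv).2
      exact hdv v hvu (fun hvx => hxT (hvx ▸ hvT))
    · have huW : u ∉ W := fun h => hu' (Finset.mem_filter.mpr ⟨h, huT⟩)
      have h1 : F.filter (fun e => e.1 = u) = ∅ := by
        rw [Finset.filter_eq_empty_iff]
        intro e he hc
        exact huW (Finset.mem_union_left _ (hc ▸ Finset.mem_image_of_mem _ he))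
      have h2 : F.filter (fun e => e.2 = u) = ∅ := by
        rw [Finset.filter_eq_empty_iff]
        intro e he hc
        exact huW (Finset.mem_union_right _ (hc ▸ Finset.mem_image_of_mem _ he))
      rw [dz, h1, h2]; simp
  have hsplit_out : (F.filter (fun e => e.1 ∈ T)).card
      = (F.filter (fun e => e.1 ∈ T ∧ e.2 ∈ T)).card + cross.card := by
    rw [hcrossdef]
    rw [← Finset.filter_filter (fun e : V × V => e.1 ∈ T) (fun e => e.2 ∈ T),
      ← Finset.filter_filter (fun e : V × V => e.1 ∈ T) (fun e => e.2 ∉ T)]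
    exact (Finset.card_filter_add_card_filter_not
      (s := F.filter (fun e => e.1 ∈ T)) (fun e => e.2 ∈ T)).symm
  have hsplit_in : (F.filter (fun e => e.2 ∈ T)).card
      = (F.filter (fun e => e.2 ∈ T ∧ e.1 ∈ T)).card := by
    have h := Finset.card_filter_add_card_filter_not
      (s := F.filter (fun e => e.2 ∈ T)) (fun e => e.1 ∈ T)
    rw [Finset.filter_filter, Finset.filter_filter] at h
    rw [hnoin] at h
    simpa using h.symm
  have hcomm : (F.filter (fun e => e.2 ∈ T ∧ e.1 ∈ T)).card
      = (F.filter (fun e => e.1 ∈ T ∧ e.2 ∈ T)).card := by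
    congr 1
    ext e
    simp only [Finset.mem_filter]
    tauto
  have hcard : (cross.card : ℤ) = dz F u := by
    rw [← hsum_u, ← hsum, hsplit_out, hsplit_in, hcomm]
    push_cast
    ring
  have hle : cross.card ≤ 1 := by omega
  intro e1 he1 e2 he2
  exact Finset.card_le_one.mp hle e1 (hsub he1) e2 (hsub he2)

end StmtAux

theorem stmt1 {V : Type*} (E : Set (V × V)) (u x y : V) (S : Set V)
    (hS : IsOneEdgeOut E u S) (hx : x ∈ S) (hy : y ∉ S)
    (hout : OutEdges E S = {(x, y)}) :
    ∃ l₁ l₂ : List V, IsPathIn E S u x l₁ ∧ IsPathIn E S u x l₂ ∧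
      ∀ e : V × V, e ∈ pathEdges l₁ → e ∉ pathEdges l₂ := by
  classical
  obtain ⟨hu, hsubS, hmin⟩ := hS
  by_cases hux : u = x
  · subst hux
    refine ⟨[u], [u], ⟨rfl, rfl, ?_, ?_⟩, ⟨rfl, rfl, ?_, ?_⟩, ?_⟩ <;>
      first
        | (intro w hw; rcases List.mem_singleton.mp hw with rfl; exact hu)
        | exact List.isChain_singleton _
        | (intro e he; simp [pathEdges] at he)
  · have h0 : ↑(∅ : Finset (V × V)) ⊆ {e : V × V | e ∈ E ∧ e.1 ∈ S ∧ e.2 ∈ S} := by simp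
    have r1 := StmtAux.residual_reach E S u x y hu hx hmin hout ∅ h0
      (by rw [StmtAux.dz_empty]; norm_num) (fun v _ _ => StmtAux.dz_empty v)
    obtain ⟨w1, hh1, hl1, hch1, hnd1w⟩ := StmtAux.exists_nodup_path r1
    obtain ⟨F1, hF1sub, hF1dz⟩ := StmtAux.augment E S x ∅ w1 ∅ u hh1 hl1 hnd1w hch1 h0
      (fun p q _ => Iff.rfl)
    have hF1dz' : ∀ v, StmtAux.dz F1 v
        = (if u = v then 1 else 0) - (if x = v then 1 else 0) := fun v => by
      rw [hF1dz v, StmtAux.dz_empty]; ring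
    have r2 := StmtAux.residual_reach E S u x y hu hx hmin hout F1 hF1sub
      (by rw [hF1dz' u]; split_ifs <;> omega)
      (fun v hvu hvx => by
        have h1 : ¬ (u = v) := fun h => hvu h.symm
        have h2 : ¬ (x = v) := fun h => hvx h.symm
        rw [hF1dz' v, if_neg h1, if_neg h2]
        ring)
    obtain ⟨w2, hh2, hl2, hch2, hnd2w⟩ := StmtAux.exists_nodup_path r2
    obtain ⟨F2, hF2sub, hF2dz⟩ := StmtAux.augment E S x F1 w2 F1 u hh2 hl2 hnd2w hch2 hF1sub
      (fun p q _ => Iff.rfl)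
    have hF2dz' : ∀ v, StmtAux.dz F2 v
        = (if u = v then 2 else 0) - (if x = v then 2 else 0) := fun v => by
      rw [hF2dz v, hF1dz' v]; split_ifs <;> omega
    obtain ⟨l₁, hP1, hnd1, hmem1⟩ := StmtAux.extract_trail E S x F2.card F2 u rfl hF2sub hu hux
      (by rw [hF2dz' u, if_pos rfl, if_neg (fun h => hux h.symm)]; omega)
      (fun v hvx => by
        have h2 : ¬ (x = v) := fun h => hvx h.symm
        rw [hF2dz' v, if_neg h2]; split_ifs <;> omega)
    have hP1sub : (pathEdges l₁).toFinset ⊆ F2 :=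
      fun e he => hmem1 e (List.mem_toFinset.mp he)
    have hdzP1 : ∀ v, StmtAux.dz (pathEdges l₁).toFinset v
        = (if u = v then 1 else 0) - (if x = v then 1 else 0) :=
      StmtAux.dz_pathEdges l₁ u x hP1.1 hP1.2.1 hnd1
    have hF3dz : ∀ v, StmtAux.dz (F2 \ (pathEdges l₁).toFinset) v
        = (if u = v then 1 else 0) - (if x = v then 1 else 0) := fun v => by
      rw [StmtAux.dz_sdiff hP1sub v, hF2dz' v, hdzP1 v]; split_ifs <;> omega
    have hF3sub : ↑(F2 \ (pathEdges l₁).toFinset)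
        ⊆ {e : V × V | e ∈ E ∧ e.1 ∈ S ∧ e.2 ∈ S} := by
      intro e he
      exact hF2sub (Finset.mem_coe.mpr (Finset.mem_sdiff.mp (Finset.mem_coe.mp he)).1)
    obtain ⟨l₂, hP2, hnd2, hmem2⟩ := StmtAux.extract_trail E S x
      (F2 \ (pathEdges l₁).toFinset).card (F2 \ (pathEdges l₁).toFinset) u rfl hF3sub hu hux
      (by rw [hF3dz u, if_pos rfl, if_neg (fun h => hux h.symm)]; omega)
      (fun v hvx => by
        have h2 : ¬ (x = v) := fun h => hvx h.symm
        rw [hF3dz v, if_neg h2]; split_ifs <;> omega)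
    refine ⟨l₁, l₂, hP1, hP2, fun e he1 he2 => ?_⟩
    have h1 : e ∈ (pathEdges l₁).toFinset := List.mem_toFinset.mpr he1
    have h2 := hmem2 e he2
    exact (Finset.mem_sdiff.mp h2).2 h1
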